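/- Let A_1,…,A_n be arbitrary real n×n matrices. Define the system S: v^T A_i w = 0 (i = 1,…,n), u^T B_j w = 0 (j = 1,…,n), u^T C_k v = 0 (k = 1,…,n), where B_1 = C_1 = E_{11} and B_i = C_i = E_{1i} − E_{i1} for i = 2,…,n; and define the system S′ identical to S except that B_1 and C_1 are replaced by zero matrices. Suppose S has no solution (u,v,w) with u, v, w all nonzero. If (u, v, w) with u, v, w all nonzero is a solution of S′, then v = c·u and w = d·u for some nonzero real numbers c, d, and consequently u is a nonzero real vector satisfying u^T A_i u = 0 for all i = 1,…,n. -/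

import Mathlib

open Matrix

lemma dot_std_aux {n : ℕ} (i j : Fin n) (u w : Fin n → ℝ) :
    u ⬝ᵥ (Matrix.single i j (1:ℝ)).mulVec w = u i * w j := by
  simp [dotProduct, Matrix.mulVec, Matrix.single, mul_ite, ite_and,
    Finset.mul_sum, Finset.sum_ite_eq, mul_comm, mul_left_comm]

/-- Claim 2: if `S` has no solution with `u, v, w` all nonzero and
`(u,v,w)` (all nonzero) solves `S′` (where `B_1 = C_1` are replaced by zero),
then `v = c·u` and `w = d·u` for some nonzero reals `c, d`, and consequently
`uᵀ A_i u = 0` for all `i`. -/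
theorem stmt_11 (n : ℕ) [NeZero n] (A : Fin n → Matrix (Fin n) (Fin n) ℝ)
    (B B' : Fin n → Matrix (Fin n) (Fin n) ℝ)
    (hB0 : B 0 = Matrix.single 0 0 1)
    (hBi : ∀ i : Fin n, i ≠ 0 →
      B i = Matrix.single 0 i 1 - Matrix.single i 0 1)
    (hB'0 : B' 0 = 0)
    (hB'i : ∀ i : Fin n, i ≠ 0 → B' i = B i)
    (hS : ¬ ∃ u v w : Fin n → ℝ, u ≠ 0 ∧ v ≠ 0 ∧ w ≠ 0 ∧
      (∀ i, v ⬝ᵥ (A i).mulVec w = 0) ∧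
      (∀ j, u ⬝ᵥ (B j).mulVec w = 0) ∧
      (∀ k, u ⬝ᵥ (B k).mulVec v = 0))
    (u v w : Fin n → ℝ) (hu : u ≠ 0) (hv : v ≠ 0) (hw : w ≠ 0)
    (h1 : ∀ i, v ⬝ᵥ (A i).mulVec w = 0)
    (h2 : ∀ j, u ⬝ᵥ (B' j).mulVec w = 0)
    (h3 : ∀ k, u ⬝ᵥ (B' k).mulVec v = 0) :
    (∃ c d : ℝ, c ≠ 0 ∧ d ≠ 0 ∧ v = c • u ∧ w = d • u) ∧
    (∀ i, u ⬝ᵥ (A i).mulVec u = 0) := by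
  -- key bilinear forms
  have hBval : ∀ (j : Fin n) (x : Fin n → ℝ), j ≠ 0 →
      u ⬝ᵥ (B j).mulVec x = u 0 * x j - u j * x 0 := by
    intro j x hj
    rw [hBi j hj, Matrix.sub_mulVec, dotProduct_sub, dot_std_aux, dot_std_aux]
  have hw' : ∀ j : Fin n, j ≠ 0 → u 0 * w j - u j * w 0 = 0 := by
    intro j hj
    have := h2 j
    rwa [hB'i j hj, hBval j w hj] at this
  have hv' : ∀ j : Fin n, j ≠ 0 → u 0 * v j - u j * v 0 = 0 := by
    intro j hj
    have := h3 j
    rwa [hB'i j hj, hBval j v hj] at this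
  -- u 0 ≠ 0
  have hu0 : u 0 ≠ 0 := by
    intro h0
    -- then w 0 = 0 (else u = 0) and similarly v 0 = 0, giving a solution of S
    have hx : ∀ (x : Fin n → ℝ), (∀ j : Fin n, j ≠ 0 → u 0 * x j - u j * x 0 = 0) →
        x 0 ≠ 0 → u = 0 := by
      intro x hxeq hx0
      funext j
      by_cases hj : j = 0
      · simp [hj, h0]
      · have := hxeq j hj
        rw [h0, zero_mul, zero_sub, neg_eq_zero] at this
        exact (mul_eq_zero.mp this).resolve_right hx0
    have hw0 : w 0 = 0 := by
      by_contra hw0; exact hu (hx w hw' hw0)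
    have hv0 : v 0 = 0 := by
      by_contra hv0; exact hu (hx v hv' hv0)
    apply hS
    refine ⟨u, v, w, hu, hv, hw, h1, ?_, ?_⟩
    · intro j
      by_cases hj : j = 0
      · rw [hj, hB0, dot_std_aux, h0, zero_mul]
      · rw [hBval j w hj, hw' j hj]
    · intro j
      by_cases hj : j = 0
      · rw [hj, hB0, dot_std_aux, h0, zero_mul]
      · rw [hBval j v hj, hv' j hj]
  -- proportionality
  have hprop : ∀ (x : Fin n → ℝ), (∀ j : Fin n, j ≠ 0 → u 0 * x j - u j * x 0 = 0) →
      x = (x 0 / u 0) • u := by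
    intro x hxeq
    funext j
    by_cases hj : j = 0
    · simp [hj]; field_simp
    · have := hxeq j hj
      have : u 0 * x j = u j * x 0 := by linarith
      simp only [Pi.smul_apply, smul_eq_mul]
      field_simp
      linarith [this]
  have hwprop := hprop w hw'
  have hvprop := hprop v hv'
  set c := v 0 / u 0 with hc
  set d := w 0 / u 0 with hd
  have hcne : c ≠ 0 := by
    intro h
    apply hv
    rw [hvprop, h, zero_smul]
  have hdne : d ≠ 0 := by
    intro h
    apply hw
    rw [hwprop, h, zero_smul]
  refine ⟨⟨c, d, hcne, hdne, hvprop, hwprop⟩, ?_⟩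
  intro i
  have := h1 i
  rw [hvprop, hwprop] at this
  rw [Matrix.mulVec_smul, dotProduct_smul, smul_dotProduct] at this
  have h' : d * (c * (u ⬝ᵥ (A i).mulVec u)) = 0 := this
  rcases mul_eq_zero.mp h' with h | h
  · exact absurd h hdne
  rcases mul_eq_zero.mp h with h | h
  · exact absurd h hcne
  · exact h
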